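/- Let g_1, …, g_M ∈ ℂ^N and h_1, …, h_M ∈ ℂ^N. The collections {T_i g_s : 1 ≤ i ≤ N, 1 ≤ s ≤ M} and {T_i h_s : 1 ≤ i ≤ N, 1 ≤ s ≤ M} are dual frames for ℂ^N, i.e. ⟨f, f₁⟩ = Σ_{i=1}^N Σ_{s=1}^M ⟨f, T_i g_s⟩ · ⟨T_i h_s, f₁⟩ for all f, f₁ ∈ ℂ^N, if and only if Σ_{s=1}^M conj(ĝ_s(l)) · ĥ_s(l) = 1/N for all 1 ≤ l ≤ N. -/

import Mathlib

open scoped ComplexConjugate BigOperators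

/-- Graph Fourier transform: `(gft χ f) l = ⟨f, χ_l⟩ = ∑ n, f n * conj (χ l n)`. -/
noncomputable def gft {N : ℕ} (χ : Fin N → EuclideanSpace ℂ (Fin N))
    (f : EuclideanSpace ℂ (Fin N)) : EuclideanSpace ℂ (Fin N) :=
  WithLp.toLp 2 fun l => ∑ n, f n * conj (χ l n)

/-- Generalized translation: `(T_i f)(n) = √N · ∑ l, f̂(l) · conj (χ l i) · χ l n`. -/
noncomputable def gtrans {N : ℕ} (χ : Fin N → EuclideanSpace ℂ (Fin N))
    (i : Fin N) (f : EuclideanSpace ℂ (Fin N)) : EuclideanSpace ℂ (Fin N) :=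
  WithLp.toLp 2 fun n => (Real.sqrt N : ℂ) * ∑ l, gft χ f l * conj (χ l i) * χ l n


lemma ortho_sum {N : ℕ} {χ : Fin N → EuclideanSpace ℂ (Fin N)}
    (hχ : Orthonormal ℂ χ) (l l' : Fin N) :
    ∑ i, χ l i * conj (χ l' i) = if l = l' then 1 else 0 := by
  have h := (orthonormal_iff_ite.mp hχ) l' l
  simp only [PiLp.inner_apply, RCLike.inner_apply] at h
  rw [h]
  simp [eq_comm]

lemma gft_inner {N : ℕ} (χ : Fin N → EuclideanSpace ℂ (Fin N))
    (f : EuclideanSpace ℂ (Fin N)) (l : Fin N) :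
    gft χ f l = inner ℂ (χ l) f := by
  simp only [gft, PiLp.inner_apply, RCLike.inner_apply]

lemma expand {N : ℕ} {χ : Fin N → EuclideanSpace ℂ (Fin N)}
    (hχ : Orthonormal ℂ χ) (hspan : Submodule.span ℂ (Set.range χ) = ⊤)
    (f : EuclideanSpace ℂ (Fin N)) (n : Fin N) :
    f n = ∑ l, gft χ f l * χ l n := by
  let b : OrthonormalBasis (Fin N) ℂ (EuclideanSpace ℂ (Fin N)) :=
    OrthonormalBasis.mk hχ (by rw [hspan])
  have hb : ∀ l, b l = χ l := fun l => by simp [b, OrthonormalBasis.coe_mk]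
  have hs := b.sum_inner_mul_inner (EuclideanSpace.single n (1:ℂ)) f
  have h1 : (inner ℂ (EuclideanSpace.single n (1:ℂ)) f : ℂ) = f n := by
    simp [EuclideanSpace.inner_single_left]
  rw [← hs] at h1
  rw [← h1]
  refine Finset.sum_congr rfl fun l _ => ?_
  rw [hb, gft_inner, mul_comm]
  congr 1
  simp [EuclideanSpace.inner_single_left]

lemma parseval {N : ℕ} {χ : Fin N → EuclideanSpace ℂ (Fin N)}
    (hχ : Orthonormal ℂ χ) (hspan : Submodule.span ℂ (Set.range χ) = ⊤)
    (f f₁ : EuclideanSpace ℂ (Fin N)) :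
    ∑ n, f n * conj (f₁ n) = ∑ l, gft χ f l * conj (gft χ f₁ l) := by
  calc ∑ n, f n * conj (f₁ n)
      = ∑ n, (∑ l, gft χ f l * χ l n) * conj (∑ l, gft χ f₁ l * χ l n) := by
        refine Finset.sum_congr rfl fun n _ => ?_
        rw [← expand hχ hspan, ← expand hχ hspan]
    _ = ∑ n, ∑ l, ∑ l', (gft χ f l * conj (gft χ f₁ l')) * (χ l n * conj (χ l' n)) := by
        refine Finset.sum_congr rfl fun n _ => ?_
        rw [map_sum, Finset.sum_mul_sum]
        refine Finset.sum_congr rfl fun l _ => Finset.sum_congr rfl fun l' _ => ?_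
        rw [map_mul]; ring
    _ = ∑ l, ∑ l', (gft χ f l * conj (gft χ f₁ l')) * ∑ n, χ l n * conj (χ l' n) := by
        rw [Finset.sum_comm]
        refine Finset.sum_congr rfl fun l _ => ?_
        rw [Finset.sum_comm]
        exact Finset.sum_congr rfl fun l' _ => (Finset.mul_sum _ _ _).symm
    _ = ∑ l, gft χ f l * conj (gft χ f₁ l) := by
        refine Finset.sum_congr rfl fun l _ => ?_
        simp only [ortho_sum hχ, mul_ite, mul_one, mul_zero, Finset.sum_ite_eq,
          Finset.mem_univ, if_true]

lemma keyA {N : ℕ} (χ : Fin N → EuclideanSpace ℂ (Fin N))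
    (i : Fin N) (u f : EuclideanSpace ℂ (Fin N)) :
    ∑ n, f n * conj (gtrans χ i u n) =
      (Real.sqrt N : ℂ) * ∑ l, (conj (gft χ u l) * gft χ f l) * χ l i := by
  calc ∑ n, f n * conj (gtrans χ i u n)
      = ∑ n, ∑ l, (Real.sqrt N : ℂ) * ((conj (gft χ u l) * χ l i) * (f n * conj (χ l n))) := by
        refine Finset.sum_congr rfl fun n _ => ?_
        simp only [gtrans, map_mul, map_sum, Complex.conj_ofReal, Complex.conj_conj,
          Finset.mul_sum]
        exact Finset.sum_congr rfl fun l _ => by ring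
    _ = (Real.sqrt N : ℂ) * ∑ l, (conj (gft χ u l) * gft χ f l) * χ l i := by
        rw [Finset.sum_comm, Finset.mul_sum]
        refine Finset.sum_congr rfl fun l _ => ?_
        rw [show gft χ f l = ∑ n, f n * conj (χ l n) from rfl]
        simp only [Finset.mul_sum, Finset.sum_mul]
        exact Finset.sum_congr rfl fun n _ => by ring

lemma keyB {N : ℕ} (χ : Fin N → EuclideanSpace ℂ (Fin N))
    (i : Fin N) (u f₁ : EuclideanSpace ℂ (Fin N)) :
    ∑ n, gtrans χ i u n * conj (f₁ n) =
      (Real.sqrt N : ℂ) * ∑ l, (gft χ u l * conj (gft χ f₁ l)) * conj (χ l i) := by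
  calc ∑ n, gtrans χ i u n * conj (f₁ n)
      = ∑ n, ∑ l, (Real.sqrt N : ℂ) * ((gft χ u l * conj (χ l i)) * (χ l n * conj (f₁ n))) := by
        refine Finset.sum_congr rfl fun n _ => ?_
        simp only [gtrans, Finset.mul_sum, Finset.sum_mul]
        exact Finset.sum_congr rfl fun l _ => by ring
    _ = (Real.sqrt N : ℂ) * ∑ l, (gft χ u l * conj (gft χ f₁ l)) * conj (χ l i) := by
        rw [Finset.sum_comm, Finset.mul_sum]
        refine Finset.sum_congr rfl fun l _ => ?_
        rw [show conj (gft χ f₁ l) = ∑ n, χ l n * conj (f₁ n) from by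
          simp only [gft, map_sum, map_mul, Complex.conj_conj]
          exact Finset.sum_congr rfl fun n _ => by ring]
        simp only [Finset.mul_sum, Finset.sum_mul]
        exact Finset.sum_congr rfl fun n _ => by ring

lemma cross {N : ℕ} {χ : Fin N → EuclideanSpace ℂ (Fin N)}
    (hχ : Orthonormal ℂ χ) (P Q : Fin N → ℂ) :
    ∑ i, (∑ l, P l * χ l i) * (∑ l, Q l * conj (χ l i)) = ∑ l, P l * Q l := by
  calc ∑ i, (∑ l, P l * χ l i) * (∑ l, Q l * conj (χ l i))
      = ∑ i, ∑ l, ∑ l', (P l * Q l') * (χ l i * conj (χ l' i)) := by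
        refine Finset.sum_congr rfl fun i _ => ?_
        rw [Finset.sum_mul_sum]
        exact Finset.sum_congr rfl fun l _ => Finset.sum_congr rfl fun l' _ => by ring
    _ = ∑ l, ∑ l', (P l * Q l') * ∑ i, χ l i * conj (χ l' i) := by
        rw [Finset.sum_comm]
        refine Finset.sum_congr rfl fun l _ => ?_
        rw [Finset.sum_comm]
        exact Finset.sum_congr rfl fun l' _ => (Finset.mul_sum _ _ _).symm
    _ = ∑ l, P l * Q l := by
        refine Finset.sum_congr rfl fun l _ => ?_
        simp only [ortho_sum hχ, mul_ite, mul_one, mul_zero, Finset.sum_ite_eq,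
          Finset.mem_univ, if_true]

lemma keyRHS {N M : ℕ} {χ : Fin N → EuclideanSpace ℂ (Fin N)}
    (hχ : Orthonormal ℂ χ)
    (g h : Fin M → EuclideanSpace ℂ (Fin N)) (f f₁ : EuclideanSpace ℂ (Fin N)) :
    ∑ i : Fin N, ∑ s : Fin M,
        (∑ n, f n * conj (gtrans χ i (g s) n)) * (∑ n, gtrans χ i (h s) n * conj (f₁ n)) =
      (N : ℂ) * ∑ l, gft χ f l * conj (gft χ f₁ l) *
        (∑ s : Fin M, conj (gft χ (g s) l) * gft χ (h s) l) := by
  have hNN : (Real.sqrt N : ℂ) * (Real.sqrt N : ℂ) = (N : ℂ) := by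
    rw [← Complex.ofReal_mul, Real.mul_self_sqrt (Nat.cast_nonneg N)]
    norm_num
  calc ∑ i : Fin N, ∑ s : Fin M,
        (∑ n, f n * conj (gtrans χ i (g s) n)) * (∑ n, gtrans χ i (h s) n * conj (f₁ n))
      = ∑ s : Fin M, ∑ i : Fin N,
          ((Real.sqrt N : ℂ) * ∑ l, (conj (gft χ (g s) l) * gft χ f l) * χ l i) *
          ((Real.sqrt N : ℂ) * ∑ l, (gft χ (h s) l * conj (gft χ f₁ l)) * conj (χ l i)) := by
        rw [Finset.sum_comm]
        exact Finset.sum_congr rfl fun s _ => Finset.sum_congr rfl fun i _ => by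
          rw [keyA, keyB]
    _ = ∑ s : Fin M, (N : ℂ) *
          ∑ l, (conj (gft χ (g s) l) * gft χ f l) * (gft χ (h s) l * conj (gft χ f₁ l)) := by
        refine Finset.sum_congr rfl fun s _ => ?_
        rw [← cross hχ (fun l => conj (gft χ (g s) l) * gft χ f l)
          (fun l => gft χ (h s) l * conj (gft χ f₁ l)), Finset.mul_sum]
        refine Finset.sum_congr rfl fun i _ => ?_
        rw [show ∀ x y : ℂ, ((Real.sqrt N : ℂ) * x) * ((Real.sqrt N : ℂ) * y) =
          ((Real.sqrt N : ℂ) * (Real.sqrt N : ℂ)) * (x * y) from fun x y => by ring, hNN]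
    _ = (N : ℂ) * ∑ l, gft χ f l * conj (gft χ f₁ l) *
          (∑ s : Fin M, conj (gft χ (g s) l) * gft χ (h s) l) := by
        simp only [← Finset.mul_sum]
        congr 1
        rw [Finset.sum_comm]
        refine Finset.sum_congr rfl fun l _ => ?_
        rw [Finset.mul_sum]
        exact Finset.sum_congr rfl fun s _ => by ring

/-- `{T_i g_s}` and `{T_i h_s}` are dual frames for `ℂ^N` iff
`∑_s conj(ĝ_s(l))·ĥ_s(l) = 1/N` for all `l`. -/
theorem translates_multi_dual_frames_iff {N M : ℕ} (hN : 0 < N)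
    (χ : Fin N → EuclideanSpace ℂ (Fin N)) (hχ : Orthonormal ℂ χ)
    (hspan : Submodule.span ℂ (Set.range χ) = ⊤)
    (g h : Fin M → EuclideanSpace ℂ (Fin N)) :
    (∀ f f₁ : EuclideanSpace ℂ (Fin N),
        (∑ n, f n * conj (f₁ n)) =
          ∑ i : Fin N, ∑ s : Fin M,
            (∑ n, f n * conj (gtrans χ i (g s) n)) *
              (∑ n, gtrans χ i (h s) n * conj (f₁ n))) ↔
    (∀ l : Fin N, (∑ s : Fin M, conj (gft χ (g s) l) * gft χ (h s) l) = 1 / N) := by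
  have hN0 : (N : ℂ) ≠ 0 := Nat.cast_ne_zero.mpr hN.ne'
  constructor
  · intro D l₀
    have hD := D (χ l₀) (χ l₀)
    rw [keyRHS hχ] at hD
    have hgl : ∀ l, gft χ (χ l₀) l = if l₀ = l then 1 else 0 :=
      fun l => ortho_sum hχ l₀ l
    have hL : ∑ n, χ l₀ n * conj (χ l₀ n) = 1 := by
      rw [ortho_sum hχ l₀ l₀]; simp
    rw [hL] at hD
    simp only [hgl, apply_ite conj, map_one, map_zero, ite_mul, mul_ite, one_mul,
      zero_mul, mul_one, mul_zero, Finset.sum_ite_eq, Finset.mem_univ, if_true] at hD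
    rw [eq_div_iff hN0]
    linear_combination -hD
  · intro hc f f₁
    rw [keyRHS hχ, parseval hχ hspan, Finset.mul_sum]
    refine Finset.sum_congr rfl fun l _ => ?_
    rw [hc l]
    field_simp
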